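/- For every density operator ρ on ℂ^d, every positive integer n and every δ > 0, Tr Π^n_{ρ,δ} ≤ exp₂(nH(ρ) + K·d·δ·√n) and Tr Π^n_{ρ,δ} ≥ (1 − d/δ²)·exp₂(nH(ρ) − K·d·δ·√n), where K = 2 log₂(e)/e and H(ρ) = −Tr(ρ log₂ ρ). -/

import Mathlib

set_option maxHeartbeats 1000000


open Matrix BigOperators Finset
open scoped Classical ComplexOrder

noncomputable section

/-- Square complex matrices of size `d` (operators on `ℂ^d`). -/
abbrev Mat (d : ℕ) := Matrix (Fin d) (Fin d) ℂ

/-- Operators on the `n`-fold tensor power `(ℂ^d)^{⊗n}`, indexed by `Fin n → Fin d`. -/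
abbrev MatPow (d n : ℕ) := Matrix (Fin n → Fin d) (Fin n → Fin d) ℂ

/-- Tensor product `A 0 ⊗ A 1 ⊗ ⋯ ⊗ A (n-1)` of a family of `d × d` matrices. -/
def tensorPow {d n : ℕ} (A : Fin n → Mat d) : MatPow d n :=
  Matrix.of fun j k => ∏ i, A i (j i) (k i)

/-- Exponential to base 2. -/
def exp2 (t : ℝ) : ℝ := (2 : ℝ) ^ t

/-- `P` is a probability distribution on the finite set `X`. -/
def IsProbDist {X : Type*} [Fintype X] (P : X → ℝ) : Prop :=
  (∀ x, 0 ≤ P x) ∧ ∑ x, P x = 1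

/-- `ρ` is a density operator (a state): positive semidefinite with trace one. -/
def IsState {ι : Type*} [Fintype ι] [DecidableEq ι] (ρ : Matrix ι ι ℂ) : Prop :=
  ρ.PosSemidef ∧ ρ.trace = 1

/-- `N(x|x^n)`: number of occurrences of the letter `x` in the sequence `xs`. -/
def countIn {X : Type*} {n : ℕ} (x : X) (xs : Fin n → X) : ℕ :=
  (Finset.univ.filter fun i => xs i = x).card

/-- The variance-typical set `T^n_{P,δ}`. -/
def typicalSet {X : Type*} [Fintype X] (n : ℕ) (P : X → ℝ) (δ : ℝ) :
    Finset (Fin n → X) :=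
  Finset.univ.filter fun xs => ∀ x : X,
    |(countIn x xs : ℝ) - n * P x| ≤ δ * Real.sqrt n * Real.sqrt (P x * (1 - P x))

/-- Product (i.i.d.) probability `P^{⊗n}(A)` of a set `A` of sequences. -/
def prodProb {X : Type*} [Fintype X] {n : ℕ} (P : X → ℝ) (A : Finset (Fin n → X)) : ℝ :=
  ∑ xs ∈ A, ∏ i, P (xs i)

/-- Shannon entropy to base 2. -/
def shannonEntropy {X : Type*} [Fintype X] (P : X → ℝ) : ℝ :=
  -∑ x, P x * Real.logb 2 (P x)

/-- von Neumann entropy to base 2, `H(ρ) = -Tr(ρ log₂ ρ)`, via the eigenvalues. -/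
def vnEntropy {d : ℕ} (ρ : Mat d) : ℝ :=
  if h : ρ.IsHermitian then -∑ i, h.eigenvalues i * Real.logb 2 (h.eigenvalues i) else 0

/-- The constant `K = 2 log₂(e) / e`. -/
def Kconst : ℝ := 2 * Real.logb 2 (Real.exp 1) / Real.exp 1

/-- A diagonalization `ρ = Σ_j R j • π j` into one-dimensional mutually orthogonal
eigenprojectors, with eigenvalue list `R` a probability distribution. -/
def IsDiagonalization {d : ℕ} (ρ : Mat d) (R : Fin d → ℝ) (π : Fin d → Mat d) : Prop :=
  (∀ j, (π j).PosSemidef) ∧ (∀ j, π j * π j = π j) ∧ (∀ j, (π j).trace = 1) ∧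
    (∀ j k, j ≠ k → π j * π k = 0) ∧ (∑ j, π j = 1) ∧
    ρ = ∑ j, (R j : ℂ) • π j ∧ IsProbDist R

/-- The variance-typical projector `Π^n_{ρ,δ}` of a state with fixed diagonalization
`(R, π)`. -/
def typicalProj {d : ℕ} (n : ℕ) (R : Fin d → ℝ) (π : Fin d → Mat d) (δ : ℝ) : MatPow d n :=
  ∑ js ∈ typicalSet n R δ, tensorPow fun i => π (js i)

/-- `B` is an `η`-shadow of the state `σ`: `0 ≤ B ≤ 1` and `Tr(σB) ≥ η`. -/
def IsShadow {ι : Type*} [Fintype ι] [DecidableEq ι] (σ B : Matrix ι ι ℂ) (η : ℝ) : Prop :=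
  B.PosSemidef ∧ ((1 : Matrix ι ι ℂ) - B).PosSemidef ∧ η ≤ (Matrix.trace (σ * B)).re

/-- Average state `PW = Σ_x P(x) W_x` of a cq-channel under input distribution `P`. -/
def avgState {X : Type*} [Fintype X] {d : ℕ} (P : X → ℝ) (W : X → Mat d) : Mat d :=
  ∑ x, (P x : ℂ) • W x

/-- Conditional von Neumann entropy `H(W|P) = Σ_x P(x) H(W_x)`. -/
def condEntropy {X : Type*} [Fintype X] {d : ℕ} (P : X → ℝ) (W : X → Mat d) : ℝ :=
  ∑ x, P x * vnEntropy (W x)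

/-- Mutual information `I(P;W) = H(PW) − H(W|P)`. -/
def mutualInfo {X : Type*} [Fintype X] {d : ℕ} (P : X → ℝ) (W : X → Mat d) : ℝ :=
  vnEntropy (avgState P W) - condEntropy P W

/-- Capacity `C(W) = max_P I(P;W)`. -/
def capacity {X : Type*} [Fintype X] {d : ℕ} (W : X → Mat d) : ℝ :=
  sSup {c | ∃ P : X → ℝ, IsProbDist P ∧ c = mutualInfo P W}

/-- `(f, D)` (with message set `M` inside the outcome index set `M'`) is an
`(n,λ)`-code for the cq-channel `W`: the `D m` are positive semidefinite, sum to the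
identity, and each message is decoded correctly with probability at least `1 - λ`. -/
def IsCode {X : Type*} [Fintype X] {d n : ℕ} (W : X → Mat d) (lam : ℝ)
    {M' : Type*} [Fintype M'] (M : Finset M') (f : M' → Fin n → X)
    (D : M' → MatPow d n) : Prop :=
  (∀ m, (D m).PosSemidef) ∧ (∑ m, D m = 1) ∧
    ∀ m ∈ M, 1 - lam ≤ (Matrix.trace (tensorPow (fun i => W (f m i)) * D m)).re

/-- `N(n,λ)`: maximal size of an `(n,λ)`-code for `W`. -/
def maxCodeSize {X : Type*} [Fintype X] (d : ℕ) (W : X → Mat d) (n : ℕ) (lam : ℝ) : ℕ :=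
  sSup {k | ∃ (M' : Type) (_ : Fintype M') (M : Finset M') (f : M' → Fin n → X)
    (D : M' → MatPow d n), IsCode W lam M f D ∧ M.card = k}

/-- Trace norm `‖A‖₁ = Tr|A|`: the sum of the singular values. -/
def traceNorm {ι : Type*} [Fintype ι] [DecidableEq ι] (A : Matrix ι ι ℂ) : ℝ :=
  ∑ i, Real.sqrt ((Matrix.posSemidef_conjTranspose_mul_self A).1.eigenvalues i)

/-- Trace distance `D(ρ,σ) = ½‖ρ−σ‖₁`. -/
def traceDist {ι : Type*} [Fintype ι] [DecidableEq ι] (ρ σ : Matrix ι ι ℂ) : ℝ :=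
  traceNorm (ρ - σ) / 2

/-- (Pure-state) fidelity `F(ρ,σ) = Tr(ρσ)`. -/
def fidelity {ι : Type*} [Fintype ι] [DecidableEq ι] (ρ σ : Matrix ι ι ℂ) : ℝ :=
  (Matrix.trace (ρ * σ)).re

/-- A pure state: the rank-one orthogonal projector `|ψ⟩⟨ψ|` onto the span of a
unit vector `ψ`. -/
def IsPureState {ι : Type*} [Fintype ι] (ρ : Matrix ι ι ℂ) : Prop :=
  ∃ ψ : ι → ℂ, (∑ i, star (ψ i) * ψ i) = 1 ∧ ρ = Matrix.vecMulVec ψ (star ψ)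

/-- The set of eigenvalue-index sequences `js` that are variance-typical, with
constant `δ`, for the distribution `q x` on each block `I_x = {i : xs i = x}`. -/
def condTypicalSet {X : Type*} [Fintype X] {n d : ℕ} (xs : Fin n → X)
    (q : X → Fin d → ℝ) (δ : ℝ) : Finset (Fin n → Fin d) :=
  Finset.univ.filter fun js => ∀ (x : X) (k : Fin d),
    |((Finset.univ.filter fun i => xs i = x ∧ js i = k).card : ℝ) - (countIn x xs : ℝ) * q x k|
      ≤ δ * Real.sqrt (countIn x xs) * Real.sqrt (q x k * (1 - q x k))

/-- Conditional variance-typical projector `Π^n_{W,δ}(x^n) = ⊗_{x∈X} Π^{I_x}_{W_x,δ}`,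
with respect to fixed diagonalizations `W_x = Σ_j (q x j) • (π x j)`. -/
def condTypicalProj {X : Type*} [Fintype X] {d : ℕ} {n : ℕ} (xs : Fin n → X)
    (q : X → Fin d → ℝ) (π : X → Fin d → Mat d) (δ : ℝ) : MatPow d n :=
  ∑ js ∈ condTypicalSet xs q δ, tensorPow fun i => π (xs i) (js i)

section AuxLemmas
variable {X : Type*} [Fintype X]

lemma sum_prod_fn {n : ℕ} (h : Fin n → X → ℝ) :
    ∑ xs : Fin n → X, ∏ i, h i (xs i) = ∏ i, ∑ x, h i x := (Fintype.prod_sum h).symm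

lemma expect_single {n : ℕ} (P : X → ℝ) (h1 : ∑ x, P x = 1) (g : X → ℝ) (i₀ : Fin n) :
    ∑ xs : Fin n → X, (∏ i, P (xs i)) * g (xs i₀) = ∑ x, P x * g x := by
  classical
  have key : ∀ xs : Fin n → X,
      (∏ i, P (xs i)) * g (xs i₀) = ∏ i, (P (xs i) * (if i = i₀ then g (xs i) else 1)) := by
    intro xs
    rw [Finset.prod_mul_distrib]
    congr 1
    simp
  calc ∑ xs : Fin n → X, (∏ i, P (xs i)) * g (xs i₀)
      = ∑ xs : Fin n → X, ∏ i, (P (xs i) * (if i = i₀ then g (xs i) else 1)) := by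
        exact Finset.sum_congr rfl fun xs _ => key xs
    _ = ∏ i, ∑ x, P x * (if i = i₀ then g x else 1) :=
        sum_prod_fn (fun i x => P x * (if i = i₀ then g x else 1))
    _ = ∑ x, P x * g x := by
        rw [Finset.prod_eq_single i₀]
        · simp
        · intro i _ hi
          simp [hi, h1]
        · simp

lemma expect_pair {n : ℕ} (P : X → ℝ) (h1 : ∑ x, P x = 1) (g : X → ℝ) {i₀ i₁ : Fin n}
    (hne : i₀ ≠ i₁) :
    ∑ xs : Fin n → X, (∏ i, P (xs i)) * (g (xs i₀) * g (xs i₁))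
      = (∑ x, P x * g x) * (∑ x, P x * g x) := by
  classical
  have key : ∀ xs : Fin n → X,
      (∏ i, P (xs i)) * (g (xs i₀) * g (xs i₁))
        = ∏ i, (P (xs i) * (if i = i₀ then g (xs i) else if i = i₁ then g (xs i) else 1)) := by
    intro xs
    rw [Finset.prod_mul_distrib]
    congr 1
    have : ∀ i : Fin n, (if i = i₀ then g (xs i) else if i = i₁ then g (xs i) else 1)
        = (if i = i₀ then g (xs i) else 1) * (if i = i₁ then g (xs i) else 1) := by
      intro i
      by_cases h0 : i = i₀
      · subst h0; simp [hne]
      · by_cases h1' : i = i₁ <;> simp [h0, h1', Ne.symm hne]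
    simp only [this]
    rw [Finset.prod_mul_distrib]
    simp
  calc ∑ xs : Fin n → X, (∏ i, P (xs i)) * (g (xs i₀) * g (xs i₁))
      = ∑ xs : Fin n → X, ∏ i, (P (xs i) * (if i = i₀ then g (xs i) else if i = i₁ then g (xs i) else 1)) :=
        Finset.sum_congr rfl fun xs _ => key xs
    _ = ∏ i, ∑ x, P x * (if i = i₀ then g x else if i = i₁ then g x else 1) :=
        sum_prod_fn (fun i x => P x * (if i = i₀ then g x else if i = i₁ then g x else 1))
    _ = (∑ x, P x * g x) * (∑ x, P x * g x) := by
        have : ∀ i : Fin n, (∑ x, P x * (if i = i₀ then g x else if i = i₁ then g x else 1))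
            = (if i = i₀ then (∑ x, P x * g x) else 1) * (if i = i₁ then (∑ x, P x * g x) else 1) := by
          intro i
          by_cases h0 : i = i₀
          · subst h0; simp [hne]
          · by_cases h1' : i = i₁ <;> simp [h0, h1', h1, Ne.symm hne]
        simp only [this]
        rw [Finset.prod_mul_distrib, Finset.prod_ite_eq' univ i₀ (fun _ => (∑ x, P x * g x)),
          Finset.prod_ite_eq' univ i₁ (fun _ => (∑ x, P x * g x))]
        simp

lemma variance_count (P : X → ℝ) (h1 : ∑ x, P x = 1) (x : X) (n : ℕ) :
    ∑ xs : Fin n → X, (∏ i, P (xs i)) * ((countIn x xs : ℝ) - n * P x) ^ 2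
      = n * (P x * (1 - P x)) := by
  classical
  set g : X → ℝ := fun y => (if y = x then (1:ℝ) else 0) - P x with hg
  have e1 : ∑ y, P y * g y = 0 := by
    simp only [hg, mul_sub, Finset.sum_sub_distrib, mul_ite, mul_one, mul_zero,
      Finset.sum_ite_eq', Finset.mem_univ, if_true, ← Finset.sum_mul, h1]
    ring
  have e2 : ∑ y, P y * (g y * g y) = P x * (1 - P x) := by
    have hy : ∀ y, P y * (g y * g y)
        = P y * (if y = x then (1:ℝ) else 0) * (1 - 2 * P x) + P y * (P x * P x) := by
      intro y; by_cases h : y = x <;> simp [hg, h] <;> ring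
    simp only [hy]
    rw [Finset.sum_add_distrib, ← Finset.sum_mul, ← Finset.sum_mul]
    simp only [mul_ite, mul_one, mul_zero, Finset.sum_ite_eq', Finset.mem_univ, if_true, h1]
    ring
  have hN : ∀ xs : Fin n → X, (countIn x xs : ℝ) - n * P x = ∑ i, g (xs i) := by
    intro xs
    have : (countIn x xs : ℝ) = ∑ i, (if xs i = x then (1:ℝ) else 0) := by
      rw [countIn, Finset.card_filter]
      push_cast
      rfl
    rw [this, hg]
    rw [Finset.sum_sub_distrib, Finset.sum_const, Finset.card_univ, Fintype.card_fin,
      nsmul_eq_mul]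
  calc ∑ xs : Fin n → X, (∏ i, P (xs i)) * ((countIn x xs : ℝ) - n * P x) ^ 2
      = ∑ xs : Fin n → X, ∑ i : Fin n, ∑ j : Fin n, (∏ i, P (xs i)) * (g (xs i) * g (xs j)) := by
        refine Finset.sum_congr rfl fun xs _ => ?_
        rw [hN xs, sq, Finset.sum_mul_sum]
        rw [Finset.mul_sum]
        refine Finset.sum_congr rfl fun i _ => ?_
        rw [Finset.mul_sum]
    _ = ∑ i : Fin n, ∑ j : Fin n, ∑ xs : Fin n → X, (∏ i, P (xs i)) * (g (xs i) * g (xs j)) := by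
        rw [Finset.sum_comm]
        refine Finset.sum_congr rfl fun i _ => Finset.sum_comm
    _ = ∑ i : Fin n, ∑ j : Fin n, (if i = j then P x * (1 - P x) else 0) := by
        refine Finset.sum_congr rfl fun i _ => Finset.sum_congr rfl fun j _ => ?_
        by_cases h : i = j
        · subst h
          simp only [if_pos rfl]
          rw [← e2]
          exact expect_single P h1 (fun y => g y * g y) i
        · rw [if_neg h, expect_pair P h1 g h, e1, mul_zero]
    _ = n * (P x * (1 - P x)) := by
        simp [Finset.sum_ite_eq]

lemma weight_nonneg {n : ℕ} {P : X → ℝ} (h0 : ∀ x, 0 ≤ P x) (xs : Fin n → X) :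
    0 ≤ ∏ i, P (xs i) :=
  Finset.prod_nonneg fun i _ => h0 (xs i)

lemma prodProb_univ {n : ℕ} {P : X → ℝ} (h1 : ∑ x, P x = 1) :
    prodProb P (univ : Finset (Fin n → X)) = 1 := by
  rw [prodProb, sum_prod_fn (fun _ x => P x)]
  simp [h1]

lemma cheb {n : ℕ} {P : X → ℝ} (hP : IsProbDist P) (hn : 0 < n) {δ : ℝ} (hδ : 0 < δ) (x : X) :
    prodProb P (univ.filter fun xs : Fin n → X =>
      ¬ |(countIn x xs : ℝ) - n * P x| ≤ δ * Real.sqrt n * Real.sqrt (P x * (1 - P x)))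
      ≤ 1 / δ ^ 2 := by
  obtain ⟨h0, h1⟩ := hP
  set σ2 : ℝ := P x * (1 - P x) with hσ2
  have hPx1 : P x ≤ 1 := by
    rw [← h1]
    exact Finset.single_le_sum (fun y _ => h0 y) (mem_univ x)
  have hσ2nn : 0 ≤ σ2 := mul_nonneg (h0 x) (by linarith)
  set B := univ.filter fun xs : Fin n → X =>
      ¬ |(countIn x xs : ℝ) - n * P x| ≤ δ * Real.sqrt n * Real.sqrt σ2 with hB
  rcases lt_or_eq_of_le hσ2nn with hσ | hσ
  · -- nondegenerate case: Chebyshev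
    have key : ∀ xs ∈ B, δ ^ 2 * n * σ2 ≤ ((countIn x xs : ℝ) - n * P x) ^ 2 := by
      intro xs hxs
      rw [hB, mem_filter] at hxs
      have hlt := lt_of_not_ge hxs.2
      have hcnn : 0 ≤ δ * Real.sqrt n * Real.sqrt σ2 := by positivity
      have := pow_le_pow_left₀ hcnn hlt.le 2
      calc δ ^ 2 * n * σ2 = (δ * Real.sqrt n * Real.sqrt σ2) ^ 2 := by
            rw [mul_pow, mul_pow, Real.sq_sqrt (Nat.cast_nonneg n), Real.sq_sqrt hσ2nn]
        _ ≤ |(countIn x xs : ℝ) - n * P x| ^ 2 := this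
        _ = ((countIn x xs : ℝ) - n * P x) ^ 2 := sq_abs _
    have step : δ ^ 2 * n * σ2 * prodProb P B ≤ n * σ2 := by
      rw [prodProb, Finset.mul_sum]
      calc ∑ xs ∈ B, δ ^ 2 * n * σ2 * ∏ i, P (xs i)
          ≤ ∑ xs ∈ B, (∏ i, P (xs i)) * ((countIn x xs : ℝ) - n * P x) ^ 2 := by
            refine Finset.sum_le_sum fun xs hxs => ?_
            rw [mul_comm]
            exact mul_le_mul_of_nonneg_left (key xs hxs) (weight_nonneg h0 xs)
        _ ≤ ∑ xs : Fin n → X, (∏ i, P (xs i)) * ((countIn x xs : ℝ) - n * P x) ^ 2 := by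
            refine Finset.sum_le_sum_of_subset_of_nonneg (Finset.filter_subset _ _)
              fun xs _ _ => ?_
            exact mul_nonneg (weight_nonneg h0 xs) (sq_nonneg _)
        _ = n * σ2 := variance_count P h1 x n
    have hpos : 0 < δ ^ 2 * n * σ2 := by
      have : (0:ℝ) < n := Nat.cast_pos.mpr hn
      positivity
    have := (le_div_iff₀' hpos).mpr step
    calc prodProb P B ≤ n * σ2 / (δ ^ 2 * n * σ2) := this
      _ = 1 / δ ^ 2 := by
          field_simp
  · -- degenerate case: the bad set has probability zero
    have hzero : prodProb P B = 0 := by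
      rw [prodProb]
      refine Finset.sum_eq_zero fun xs hxs => ?_
      rw [hB, mem_filter] at hxs
      have hbad := hxs.2
      rw [← hσ, Real.sqrt_zero, mul_zero] at hbad
      have hne : (countIn x xs : ℝ) ≠ n * P x := by
        intro h
        exact hbad (by rw [h, sub_self, abs_zero])
      rcases mul_eq_zero.mp hσ.symm with hP0 | hP1
      · -- P x = 0
        have hc : countIn x xs ≠ 0 := by
          intro h
          exact hne (by rw [h, hP0]; simp)
        obtain ⟨i, hi⟩ : ∃ i, xs i = x := by
          rw [countIn] at hc
          obtain ⟨i, hi⟩ := Finset.card_ne_zero.mp hc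
          exact ⟨i, (mem_filter.mp hi).2⟩
        exact Finset.prod_eq_zero (mem_univ i) (by rw [hi]; exact hP0)
      · -- P x = 1
        have hPx : P x = 1 := by linarith
        have hy : ∀ y, y ≠ x → P y = 0 := by
          intro y hyx
          have hsum : ∑ z ∈ univ.erase x, P z = 0 := by
            have := Finset.add_sum_erase univ P (mem_univ x)
            rw [h1] at this
            linarith [this, hPx]
          have := (Finset.sum_eq_zero_iff_of_nonneg fun z _ => h0 z).mp hsum
          exact this y (Finset.mem_erase.mpr ⟨hyx, mem_univ y⟩)
        obtain ⟨i, hi⟩ : ∃ i, xs i ≠ x := by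
          by_contra hall
          push_neg at hall
          apply hne
          rw [hPx, mul_one, countIn]
          congr 1
          rw [Finset.filter_true_of_mem fun i _ => hall i, Finset.card_univ, Fintype.card_fin]
        exact Finset.prod_eq_zero (mem_univ i) (hy _ hi)
    rw [hzero]
    positivity

lemma typicalSet_prob {n : ℕ} {P : X → ℝ} (hP : IsProbDist P) (hn : 0 < n) {δ : ℝ}
    (hδ : 0 < δ) :
    1 - (Fintype.card X : ℝ) / δ ^ 2 ≤ prodProb P (typicalSet n P δ) := by
  classical
  set p : (Fin n → X) → Prop := fun xs => ∀ x : X,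
    |(countIn x xs : ℝ) - n * P x| ≤ δ * Real.sqrt n * Real.sqrt (P x * (1 - P x)) with hp
  have hsplit : prodProb P (typicalSet n P δ)
      + prodProb P (univ.filter fun xs => ¬ p xs) = 1 := by
    rw [typicalSet, prodProb, prodProb, Finset.sum_filter_add_sum_filter_not,
      ← prodProb, prodProb_univ hP.2]
  have hbad : prodProb P (univ.filter fun xs => ¬ p xs) ≤ (Fintype.card X : ℝ) / δ ^ 2 := by
    have step1 : prodProb P (univ.filter fun xs => ¬ p xs)
        ≤ ∑ x : X, prodProb P (univ.filter fun xs : Fin n → X =>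
          ¬ |(countIn x xs : ℝ) - n * P x| ≤ δ * Real.sqrt n * Real.sqrt (P x * (1 - P x))) := by
      rw [prodProb]
      calc ∑ xs ∈ univ.filter fun xs => ¬ p xs, ∏ i, P (xs i)
          ≤ ∑ xs ∈ univ.filter (fun xs => ¬ p xs), ∑ x : X,
              (if ¬ |(countIn x xs : ℝ) - n * P x|
                  ≤ δ * Real.sqrt n * Real.sqrt (P x * (1 - P x))
                then ∏ i, P (xs i) else 0) := by
            refine Finset.sum_le_sum fun xs hxs => ?_
            have hxs2 : ¬ ∀ x : X, |(countIn x xs : ℝ) - n * P x|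
                ≤ δ * Real.sqrt n * Real.sqrt (P x * (1 - P x)) := (mem_filter.mp hxs).2
            push_neg at hxs2
            obtain ⟨x₀, hx₀⟩ := hxs2
            have hterm : (∏ i, P (xs i))
                = (if ¬ |(countIn x₀ xs : ℝ) - n * P x₀|
                    ≤ δ * Real.sqrt n * Real.sqrt (P x₀ * (1 - P x₀))
                  then ∏ i, P (xs i) else 0) := by
              rw [if_pos (not_le.mpr hx₀)]
            refine le_trans (le_of_eq hterm) ?_
            refine Finset.single_le_sum (f := fun x : X =>
              (if ¬ |(countIn x xs : ℝ) - n * P x|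
                  ≤ δ * Real.sqrt n * Real.sqrt (P x * (1 - P x))
                then ∏ i, P (xs i) else 0)) (fun x _ => ?_) (mem_univ x₀)
            split
            · exact weight_nonneg hP.1 xs
            · exact le_rfl
        _ = ∑ x : X, ∑ xs ∈ univ.filter (fun xs => ¬ p xs),
              (if ¬ |(countIn x xs : ℝ) - n * P x|
                  ≤ δ * Real.sqrt n * Real.sqrt (P x * (1 - P x))
                then ∏ i, P (xs i) else 0) := Finset.sum_comm
        _ ≤ ∑ x : X, prodProb P (univ.filter fun xs : Fin n → X =>
              ¬ |(countIn x xs : ℝ) - n * P x|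
                ≤ δ * Real.sqrt n * Real.sqrt (P x * (1 - P x))) := by
            refine Finset.sum_le_sum fun x _ => ?_
            have hrw : prodProb P (univ.filter fun xs : Fin n → X =>
                ¬ |(countIn x xs : ℝ) - n * P x|
                  ≤ δ * Real.sqrt n * Real.sqrt (P x * (1 - P x)))
                = ∑ xs : Fin n → X, (if ¬ |(countIn x xs : ℝ) - n * P x|
                    ≤ δ * Real.sqrt n * Real.sqrt (P x * (1 - P x))
                  then ∏ i, P (xs i) else 0) := by
              rw [prodProb, Finset.sum_filter]
            rw [hrw]
            refine Finset.sum_le_sum_of_subset_of_nonneg (Finset.filter_subset _ _)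
              fun xs _ _ => ?_
            split
            · exact weight_nonneg hP.1 xs
            · exact le_rfl
    calc prodProb P (univ.filter fun xs => ¬ p xs) ≤ _ := step1
      _ ≤ ∑ _x : X, 1 / δ ^ 2 := Finset.sum_le_sum fun x _ => cheb hP hn hδ x
      _ = (Fintype.card X : ℝ) / δ ^ 2 := by
          rw [Finset.sum_const, Finset.card_univ, nsmul_eq_mul]
          ring
  linarith

lemma exp2_add (s t : ℝ) : exp2 (s + t) = exp2 s * exp2 t := Real.rpow_add two_pos s t

lemma exp2_sum {α : Type*} (s : Finset α) (f : α → ℝ) :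
    exp2 (∑ x ∈ s, f x) = ∏ x ∈ s, exp2 (f x) := by
  classical
  induction s using Finset.induction with
  | empty => simp [exp2]
  | insert _ _ h ih => rw [sum_insert h, prod_insert h, exp2_add, ih]

lemma exp2_le_exp2 {s t : ℝ} (h : s ≤ t) : exp2 s ≤ exp2 t :=
  (Real.rpow_le_rpow_left_iff (by norm_num : (1:ℝ) < 2)).2 h

lemma Kconst_nonneg : 0 ≤ Kconst := by
  have h1 : 0 ≤ Real.logb 2 (Real.exp 1) :=
    Real.logb_nonneg (by norm_num) (Real.one_le_exp (by norm_num))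
  have := Real.exp_pos 1
  rw [Kconst]
  positivity

lemma log_le_div_e {u : ℝ} (hu : 0 < u) : Real.log u ≤ u / Real.exp 1 := by
  have h := Real.log_le_sub_one_of_pos (show 0 < u / Real.exp 1 by positivity)
  rw [Real.log_div hu.ne' (Real.exp_ne_zero 1), Real.log_exp] at h
  linarith

lemma Kconst_eq : Kconst = 2 / (Real.exp 1 * Real.log 2) := by
  have hlog2 : 0 < Real.log 2 := Real.log_pos (by norm_num)
  have he := Real.exp_pos 1
  rw [Kconst, Real.logb, Real.log_exp]
  field_simp

/-- key analytic bound: `√(p(1-p)) |log₂ p| ≤ K` for `0 ≤ p ≤ 1`. -/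

lemma key_bound {p : ℝ} (h0 : 0 ≤ p) (h1 : p ≤ 1) :
    Real.sqrt (p * (1 - p)) * |Real.logb 2 p| ≤ Kconst := by
  rcases eq_or_lt_of_le h0 with h | hp
  · simp [← h, Real.logb, Kconst_nonneg]
  · have hlog2 : 0 < Real.log 2 := Real.log_pos (by norm_num)
    have he := Real.exp_pos 1
    have hsp : 0 < Real.sqrt p := Real.sqrt_pos.mpr hp
    have hlogp : Real.log p ≤ 0 := Real.log_nonpos h0 h1
    have habs : |Real.logb 2 p| = (- Real.log p) / Real.log 2 := by
      rw [Real.logb, abs_div, abs_of_nonneg hlog2.le, abs_of_nonpos hlogp]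
    have hsqle : Real.sqrt (p * (1 - p)) ≤ Real.sqrt p := by
      apply Real.sqrt_le_sqrt
      nlinarith
    have hkey : - Real.log p ≤ 2 / (Real.exp 1 * Real.sqrt p) := by
      have h2 : Real.log p = 2 * Real.log (Real.sqrt p) := by
        conv_lhs => rw [← Real.sq_sqrt hp.le]
        rw [Real.log_pow]
        push_cast
        ring
      have h3 : Real.log (Real.sqrt p)⁻¹ ≤ (Real.sqrt p)⁻¹ / Real.exp 1 :=
        log_le_div_e (by positivity)
      rw [Real.log_inv] at h3
      have : - Real.log p = 2 * (- Real.log (Real.sqrt p)) := by rw [h2]; ring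
      rw [this]
      rw [div_eq_mul_inv, mul_inv]
      calc 2 * (- Real.log (Real.sqrt p)) ≤ 2 * ((Real.sqrt p)⁻¹ / Real.exp 1) := by linarith
        _ = 2 * ((Real.exp 1)⁻¹ * (Real.sqrt p)⁻¹) := by ring
    calc Real.sqrt (p * (1 - p)) * |Real.logb 2 p|
        ≤ Real.sqrt p * |Real.logb 2 p| :=
          mul_le_mul_of_nonneg_right hsqle (abs_nonneg _)
      _ = Real.sqrt p * (- Real.log p) / Real.log 2 := by rw [habs]; ring
      _ ≤ Real.sqrt p * (2 / (Real.exp 1 * Real.sqrt p)) / Real.log 2 := by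
          have hmul : Real.sqrt p * (- Real.log p)
              ≤ Real.sqrt p * (2 / (Real.exp 1 * Real.sqrt p)) :=
            mul_le_mul_of_nonneg_left hkey hsp.le
          exact div_le_div_of_nonneg_right hmul hlog2.le
      _ = Kconst := by
          rw [Kconst_eq]
          field_simp

lemma exp2_pos (t : ℝ) : 0 < exp2 t := Real.rpow_pos_of_pos two_pos t

lemma exp2_zero : exp2 0 = 1 := Real.rpow_zero 2

lemma exp2_neg (t : ℝ) : exp2 (-t) = 1 / exp2 t := by
  rw [eq_div_iff (exp2_pos t).ne', ← exp2_add, neg_add_cancel, exp2_zero]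

lemma prod_eq_prod_pow {n : ℕ} (P : X → ℝ) (xs : Fin n → X) :
    ∏ i, P (xs i) = ∏ x, P x ^ countIn x xs := by
  rw [← Finset.prod_fiberwise_of_maps_to (g := xs) (fun i _ => mem_univ (xs i)) (fun i => P (xs i))]
  refine Finset.prod_congr rfl fun x _ => ?_
  rw [countIn, ← Finset.prod_const]
  refine Finset.prod_congr rfl fun i hi => ?_
  rw [(Finset.mem_filter.mp hi).2]

lemma countIn_eq_zero {n : ℕ} {P : X → ℝ} {δ : ℝ} {xs : Fin n → X}
    (hxs : xs ∈ typicalSet n P δ) {x : X} (hPx : P x = 0) : countIn x xs = 0 := by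
  have h := (Finset.mem_filter.mp hxs).2 x
  rw [hPx] at h
  simp only [mul_zero, zero_mul, Real.sqrt_zero, sub_zero] at h
  have hz : (countIn x xs : ℝ) = 0 := abs_eq_zero.mp (le_antisymm h (abs_nonneg _))
  exact_mod_cast hz

lemma typical_weight_eq {n : ℕ} {P : X → ℝ} (hP : IsProbDist P) {δ : ℝ} {xs : Fin n → X}
    (hxs : xs ∈ typicalSet n P δ) :
    ∏ i, P (xs i) = exp2 (∑ x, (countIn x xs : ℝ) * Real.logb 2 (P x)) := by
  rw [prod_eq_prod_pow, exp2_sum]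
  refine Finset.prod_congr rfl fun x _ => ?_
  rcases eq_or_lt_of_le (hP.1 x) with h | hp
  · rw [countIn_eq_zero hxs h.symm]
    simp [exp2]
  · rw [exp2, mul_comm, Real.rpow_mul (by norm_num : (0:ℝ) ≤ 2),
      Real.rpow_logb two_pos (by norm_num) hp, Real.rpow_natCast]

lemma typical_exponent {n : ℕ} {P : X → ℝ} (hP : IsProbDist P) {δ : ℝ} (hδ : 0 ≤ δ)
    {xs : Fin n → X} (hxs : xs ∈ typicalSet n P δ) :
    |∑ x, (countIn x xs : ℝ) * Real.logb 2 (P x) + n * shannonEntropy P|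
      ≤ Kconst * (Fintype.card X) * δ * Real.sqrt n := by
  have hPx1 : ∀ x, P x ≤ 1 := by
    intro x
    rw [← hP.2]
    exact Finset.single_le_sum (fun y _ => hP.1 y) (mem_univ x)
  have hrw : ∑ x, (countIn x xs : ℝ) * Real.logb 2 (P x) + n * shannonEntropy P
      = ∑ x, ((countIn x xs : ℝ) - n * P x) * Real.logb 2 (P x) := by
    rw [shannonEntropy, mul_neg, Finset.mul_sum, ← sub_eq_add_neg, ← Finset.sum_sub_distrib]
    exact Finset.sum_congr rfl fun x _ => by ring
  rw [hrw]
  calc |∑ x, ((countIn x xs : ℝ) - n * P x) * Real.logb 2 (P x)|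
      ≤ ∑ x, |((countIn x xs : ℝ) - n * P x) * Real.logb 2 (P x)| :=
        Finset.abs_sum_le_sum_abs _ _
    _ ≤ ∑ _x : X, δ * Real.sqrt n * Kconst := by
        refine Finset.sum_le_sum fun x _ => ?_
        rw [abs_mul]
        have h1 := (Finset.mem_filter.mp hxs).2 x
        calc |(countIn x xs : ℝ) - n * P x| * |Real.logb 2 (P x)|
            ≤ (δ * Real.sqrt n * Real.sqrt (P x * (1 - P x))) * |Real.logb 2 (P x)| :=
              mul_le_mul_of_nonneg_right h1 (abs_nonneg _)
          _ = (δ * Real.sqrt n) * (Real.sqrt (P x * (1 - P x)) * |Real.logb 2 (P x)|) := by ring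
          _ ≤ (δ * Real.sqrt n) * Kconst := by
              refine mul_le_mul_of_nonneg_left (key_bound (hP.1 x) (hPx1 x)) ?_
              positivity
          _ = δ * Real.sqrt n * Kconst := rfl
    _ = Kconst * (Fintype.card X) * δ * Real.sqrt n := by
        rw [Finset.sum_const, Finset.card_univ, nsmul_eq_mul]
        ring

lemma typicalSet_card_upper {n : ℕ} {P : X → ℝ} (hP : IsProbDist P) {δ : ℝ} (hδ : 0 ≤ δ) :
    ((typicalSet n P δ).card : ℝ)
      ≤ exp2 (n * shannonEntropy P + Kconst * (Fintype.card X) * δ * Real.sqrt n) := by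
  set s := Kconst * (Fintype.card X : ℝ) * δ * Real.sqrt n with hs
  set L := exp2 (-(n * shannonEntropy P) - s) with hL
  have hLpos : 0 < L := exp2_pos _
  have hcard : ((typicalSet n P δ).card : ℝ) * L ≤ 1 := by
    calc ((typicalSet n P δ).card : ℝ) * L = ∑ _xs ∈ typicalSet n P δ, L := by
          rw [Finset.sum_const, nsmul_eq_mul]
      _ ≤ ∑ xs ∈ typicalSet n P δ, ∏ i, P (xs i) := by
          refine Finset.sum_le_sum fun xs hxs => ?_
          rw [typical_weight_eq hP hxs]
          refine exp2_le_exp2 ?_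
          have habs := typical_exponent hP hδ hxs
          rw [abs_le] at habs
          rw [hs]
          linarith [habs.1]
      _ ≤ ∑ xs : Fin n → X, ∏ i, P (xs i) := by
          refine Finset.sum_le_sum_of_subset_of_nonneg (Finset.filter_subset _ _)
            fun xs _ _ => Finset.prod_nonneg fun i _ => hP.1 (xs i)
      _ = 1 := prodProb_univ hP.2
  have h1L : 1 / L = exp2 (n * shannonEntropy P + s) := by
    rw [← exp2_neg]
    congr 1
    ring
  rw [← h1L]
  exact (le_div_iff₀ hLpos).mpr hcard

lemma typicalSet_card_lower {n : ℕ} {P : X → ℝ} (hP : IsProbDist P) (hn : 0 < n) {δ : ℝ}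
    (hδ : 0 < δ) :
    (1 - (Fintype.card X : ℝ) / δ ^ 2)
        * exp2 (n * shannonEntropy P - Kconst * (Fintype.card X) * δ * Real.sqrt n)
      ≤ ((typicalSet n P δ).card : ℝ) := by
  set s := Kconst * (Fintype.card X : ℝ) * δ * Real.sqrt n with hs
  set U := exp2 (-(n * shannonEntropy P) + s) with hU
  have h2 : prodProb P (typicalSet n P δ) ≤ ((typicalSet n P δ).card : ℝ) * U := by
    rw [prodProb]
    calc ∑ xs ∈ typicalSet n P δ, ∏ i, P (xs i) ≤ ∑ _xs ∈ typicalSet n P δ, U := by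
          refine Finset.sum_le_sum fun xs hxs => ?_
          rw [typical_weight_eq hP hxs]
          refine exp2_le_exp2 ?_
          have habs := typical_exponent hP hδ.le hxs
          rw [abs_le] at habs
          rw [hs]
          linarith [habs.2]
      _ = ((typicalSet n P δ).card : ℝ) * U := by rw [Finset.sum_const, nsmul_eq_mul]
  have h3 : 1 - (Fintype.card X : ℝ) / δ ^ 2 ≤ ((typicalSet n P δ).card : ℝ) * U :=
    le_trans (typicalSet_prob hP hn hδ) h2
  calc (1 - (Fintype.card X : ℝ) / δ ^ 2) * exp2 (n * shannonEntropy P - s)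
      ≤ (((typicalSet n P δ).card : ℝ) * U) * exp2 (n * shannonEntropy P - s) :=
        mul_le_mul_of_nonneg_right h3 (exp2_pos _).le
    _ = ((typicalSet n P δ).card : ℝ) * (U * exp2 (n * shannonEntropy P - s)) := by ring
    _ = ((typicalSet n P δ).card : ℝ) := by
        rw [hU, ← exp2_add]
        have : -(n * shannonEntropy P) + s + (n * shannonEntropy P - s) = 0 := by ring
        rw [this, exp2_zero, mul_one]

end AuxLemmas

lemma trace_tensorPow {d n : ℕ} (A : Fin n → Mat d) :
    Matrix.trace (tensorPow A) = ∏ i, Matrix.trace (A i) := by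
  have : ∀ i, Matrix.trace (A i) = ∑ k, A i k k := fun i => rfl
  simp only [this]
  rw [Fintype.prod_sum (fun i k => A i k k)]
  rfl

lemma trace_typicalProj {d n : ℕ} (R : Fin d → ℝ) (π : Fin d → Mat d)
    (hπ : ∀ j, (π j).trace = 1) (δ : ℝ) :
    Matrix.trace (typicalProj n R π δ) = ((typicalSet n R δ).card : ℂ) := by
  rw [typicalProj, Matrix.trace_sum]
  rw [Finset.sum_congr rfl fun js _ => (trace_tensorPow fun i => π (js i))]
  simp [hπ]

lemma rank_one_of_proj {d : ℕ} (π : Mat d) (h1 : π.PosSemidef) (h2 : π * π = π)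
    (h3 : π.trace = 1) :
    ∃ v : Fin d → ℂ, (∑ a, star (v a) * v a) = 1 ∧ ∀ a b, π a b = v a * star (v b) := by
  have hh : π.IsHermitian := h1.isHermitian
  set U : Mat d := (hh.eigenvectorUnitary : Mat d) with hUdef
  have hUU : star U * U = 1 := Unitary.coe_star_mul_self hh.eigenvectorUnitary
  have hUU' : U * star U = 1 := Unitary.coe_mul_star_self hh.eigenvectorUnitary
  set μ : Fin d → ℝ := hh.eigenvalues with hμ
  have hdiag : star U * π * U = Matrix.diagonal (RCLike.ofReal ∘ μ) :=
    by
      conv_lhs => rw [hh.spectral_theorem, Unitary.conjStarAlgAut_apply]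
      rw [← hUdef]
      have : star U * (U * Matrix.diagonal (RCLike.ofReal ∘ μ) * star U) * U
          = (star U * U) * Matrix.diagonal (RCLike.ofReal ∘ μ) * (star U * U) := by noncomm_ring
      rw [this, hUU, Matrix.one_mul, Matrix.mul_one]
  -- idempotence of the diagonal
  have hdiag2 : ∀ i, (μ i : ℂ) * (μ i : ℂ) = (μ i : ℂ) := by
    intro i
    have : (star U * π * U) * (star U * π * U) = star U * π * U := by
      calc (star U * π * U) * (star U * π * U) = star U * π * (U * star U) * π * U := by
            noncomm_ring
        _ = star U * (π * π) * U := by rw [hUU']; noncomm_ring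
        _ = star U * π * U := by rw [h2]
    rw [hdiag, Matrix.diagonal_mul_diagonal] at this
    have := congrFun (congrFun (congrArg (fun M : Mat d => (M : Mat d)) this) i) i
    simpa [Matrix.diagonal_apply_eq] using this
  have hμ01 : ∀ i, μ i = 0 ∨ μ i = 1 := by
    intro i
    have h := hdiag2 i
    have : (μ i) * (μ i) = μ i := by exact_mod_cast h
    have h0 : μ i * (μ i - 1) = 0 := by nlinarith
    rcases mul_eq_zero.mp h0 with h' | h'
    · exact Or.inl h'
    · exact Or.inr (by linarith)
  -- trace
  have htr : ∑ i, μ i = 1 := by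
    have : Matrix.trace (star U * π * U) = Matrix.trace (Matrix.diagonal (RCLike.ofReal ∘ μ)) :=
      congrArg _ hdiag
    rw [Matrix.trace_mul_cycle, hUU', Matrix.one_mul, h3, Matrix.trace_diagonal] at this
    have : ((1:ℂ)) = ∑ i, ((μ i : ℂ)) := by simpa using this
    have := congrArg Complex.re this
    simpa using this.symm
  -- locate the unique eigenvalue 1
  have hex : ∃ i₀, μ i₀ = 1 ∧ ∀ i, i ≠ i₀ → μ i = 0 := by
    have hnz : ∃ i₀, μ i₀ ≠ 0 := by
      by_contra hall
      push_neg at hall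
      rw [Finset.sum_eq_zero (fun i _ => hall i)] at htr
      norm_num at htr
    obtain ⟨i₀, hi₀⟩ := hnz
    have h1' : μ i₀ = 1 := (hμ01 i₀).resolve_left hi₀
    refine ⟨i₀, h1', fun i hi => ?_⟩
    have hsplit := Finset.add_sum_erase univ μ (mem_univ i₀)
    rw [htr] at hsplit
    have hzero : ∑ j ∈ univ.erase i₀, μ j = 0 := by linarith
    have hnn : ∀ j ∈ univ.erase i₀, 0 ≤ μ j := by
      intro j _
      rcases hμ01 j with h | h <;> simp [h]
    exact (Finset.sum_eq_zero_iff_of_nonneg hnn).mp hzero i (Finset.mem_erase.mpr ⟨hi, mem_univ i⟩)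
  obtain ⟨i₀, hone, hzero⟩ := hex
  refine ⟨fun a => U a i₀, ?_, ?_⟩
  · have := congrFun (congrFun hUU i₀) i₀
    simp only [Matrix.mul_apply, Matrix.one_apply_eq, Matrix.star_eq_conjTranspose,
      Matrix.conjTranspose_apply] at this
    rw [← this]
  · intro a b
    have hspec := hh.spectral_theorem
    have hent : π a b = ∑ k, U a k * ((μ k : ℝ) : ℂ) * star (U b k) := by
      conv_lhs => rw [hspec, Unitary.conjStarAlgAut_apply]
      simp only [Matrix.mul_apply, Matrix.diagonal_apply, Matrix.star_eq_conjTranspose,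
        Matrix.conjTranspose_apply, ite_mul, zero_mul, mul_ite, mul_zero,
        Finset.sum_ite_eq, Finset.sum_ite_eq', Finset.mem_univ, if_true]
      refine Finset.sum_congr rfl fun k _ => ?_
      rfl
    rw [hent, Finset.sum_eq_single i₀]
    · rw [hone]
      push_cast
      ring
    · intro k _ hk
      rw [hzero k hk]
      push_cast
      ring
    · intro h
      exact absurd (mem_univ i₀) h

open Polynomial in
lemma charpoly_conj_units {d : ℕ} (U W M : Mat d) (hUW : U * W = 1) (hWU : W * U = 1) :
    (U * M * W).charpoly = M.charpoly := by
  have hs : ∀ A : Matrix (Fin d) (Fin d) ℂ[X],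
      Matrix.scalar (Fin d) (X : ℂ[X]) * A = A * Matrix.scalar (Fin d) (X : ℂ[X]) :=
    fun A => (Matrix.scalar_commute (X : ℂ[X]) (fun r' => Commute.all _ _) A)
  have hone : (1 : Mat d).map (C : ℂ →+* ℂ[X]) = 1 := Matrix.map_one _ (map_zero C) (map_one C)
  have h1 : U.map C * Matrix.scalar (Fin d) (X : ℂ[X]) * W.map C
      = Matrix.scalar (Fin d) (X : ℂ[X]) := by
    calc U.map C * Matrix.scalar (Fin d) (X : ℂ[X]) * W.map C
        = U.map C * (Matrix.scalar (Fin d) (X : ℂ[X]) * W.map C) := by rw [Matrix.mul_assoc]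
      _ = U.map C * (W.map C * Matrix.scalar (Fin d) (X : ℂ[X])) := by rw [hs]
      _ = (U.map C * W.map C) * Matrix.scalar (Fin d) (X : ℂ[X]) := by rw [Matrix.mul_assoc]
      _ = Matrix.scalar (Fin d) (X : ℂ[X]) := by
          rw [← Matrix.map_mul, hUW, hone, Matrix.one_mul]
  have hcm : charmatrix (U * M * W) = (U.map C) * charmatrix M * (W.map C) := by
    rw [charmatrix, charmatrix, Matrix.mul_sub, Matrix.sub_mul, h1]
    congr 1
    simp only [RingHom.mapMatrix_apply]
    rw [← Matrix.map_mul, ← Matrix.map_mul]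
  have hdet : (U.map (C : ℂ →+* ℂ[X])).det * (W.map C).det = 1 := by
    rw [← Matrix.det_mul, ← Matrix.map_mul, hUW, hone, Matrix.det_one]
  rw [Matrix.charpoly, Matrix.charpoly, hcm, Matrix.det_mul, Matrix.det_mul]
  linear_combination (charmatrix M).det * hdet

open Polynomial in
lemma charpoly_diagonal {d : ℕ} (v : Fin d → ℂ) :
    (Matrix.diagonal v).charpoly = ∏ i, (X - C (v i)) := by
  rw [Matrix.charpoly_of_upperTriangular _ (Matrix.blockTriangular_diagonal v)]
  simp

open Polynomial in
lemma eig_multiset {d : ℕ} (A : Mat d) (hA : A.IsHermitian) (R : Fin d → ℝ) (V : Mat d)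
    (hV : V * star V = 1) (hV' : star V * V = 1)
    (hA' : A = V * Matrix.diagonal (fun j => (R j : ℂ)) * star V) :
    (univ.val.map fun j : Fin d => ((R j : ℂ))) = (univ.val.map fun i => ((hA.eigenvalues i : ℂ))) := by
  have h1 : A.charpoly = ∏ j, (X - C ((R j : ℂ))) := by
    rw [hA', charpoly_conj_units _ _ _ hV hV', charpoly_diagonal]
  have h2 : A.charpoly = ∏ i, (X - C ((hA.eigenvalues i : ℂ))) := by
    have h2' := charpoly_conj_units ((hA.eigenvectorUnitary : Mat d))
      (star (hA.eigenvectorUnitary : Mat d))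
      (Matrix.diagonal (RCLike.ofReal ∘ hA.eigenvalues))
      (Unitary.coe_mul_star_self hA.eigenvectorUnitary)
      (Unitary.coe_star_mul_self hA.eigenvectorUnitary)
    conv_lhs => rw [hA.spectral_theorem, Unitary.conjStarAlgAut_apply]
    rw [h2', charpoly_diagonal]
    rfl
  have key : (∏ j, (X - C ((R j : ℂ)))) = ∏ i, (X - C ((hA.eigenvalues i : ℂ))) :=
    h1.symm.trans h2
  have conv1 : (∏ j, (X - C ((R j : ℂ))))
      = ((univ.val.map fun j : Fin d => ((R j : ℂ))).map fun a => X - C a).prod := by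
    rw [Finset.prod_eq_multiset_prod, Multiset.map_map]
    rfl
  have conv2 : (∏ i, (X - C ((hA.eigenvalues i : ℂ))))
      = ((univ.val.map fun i : Fin d => ((hA.eigenvalues i : ℂ))).map fun a => X - C a).prod := by
    rw [Finset.prod_eq_multiset_prod, Multiset.map_map]
    rfl
  have := congrArg Polynomial.roots (conv1.symm.trans (key.trans conv2))
  rwa [Polynomial.roots_multiset_prod_X_sub_C, Polynomial.roots_multiset_prod_X_sub_C] at this

lemma vnEntropy_eq_shannon {d : ℕ} (ρ : Mat d) (hρ : IsState ρ) (R : Fin d → ℝ)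
    (π : Fin d → Mat d) (hdiag : IsDiagonalization ρ R π) :
    vnEntropy ρ = shannonEntropy R := by
  obtain ⟨hpsd, hidem, htr1, horth, hsum1, hρeq, hprob⟩ := hdiag
  choose v hvunit hventry using fun j => rank_one_of_proj (π j) (hpsd j) (hidem j) (htr1 j)
  have hvne : ∀ j, ∃ a, v j a ≠ 0 := by
    intro j
    by_contra hall
    push_neg at hall
    have := hvunit j
    rw [Finset.sum_eq_zero (fun a _ => by rw [hall a, mul_zero])] at this
    norm_num at this
  have hortho : ∀ j k, j ≠ k → ∑ m, star (v j m) * v k m = 0 := by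
    intro j k hjk
    obtain ⟨a, ha⟩ := hvne j
    obtain ⟨b, hb⟩ := hvne k
    have hentry := congrFun (congrFun (horth j k hjk) a) b
    rw [Matrix.mul_apply] at hentry
    simp only [Matrix.zero_apply] at hentry
    have hz : (v j a * (∑ m, star (v j m) * v k m)) * star (v k b) = 0 := by
      rw [← hentry]
      rw [Finset.mul_sum, Finset.sum_mul]
      refine Finset.sum_congr rfl fun m _ => ?_
      rw [hventry j a m, hventry k m b]
      ring
    rcases mul_eq_zero.mp hz with h | h
    · rcases mul_eq_zero.mp h with h' | h'
      · exact absurd h' ha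
      · exact h'
    · exact absurd h (star_ne_zero.mpr hb)
  set V : Mat d := Matrix.of (fun a j => v j a) with hVdef
  have hVV : star V * V = 1 := by
    ext j k
    rw [Matrix.mul_apply, Matrix.one_apply]
    have : ∀ a, (star V) j a * V a k = star (v j a) * v k a := by
      intro a
      rw [Matrix.star_eq_conjTranspose, Matrix.conjTranspose_apply]
      rfl
    rw [Finset.sum_congr rfl fun a _ => this a]
    by_cases h : j = k
    · subst h
      rw [if_pos rfl, hvunit j]
    · rw [if_neg h, hortho j k h]
  have hVV' : V * star V = 1 := mul_eq_one_comm.mp hVV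
  have hρdiag : ρ = V * Matrix.diagonal (fun j => (R j : ℂ)) * star V := by
    ext a b
    rw [hρeq]
    rw [Matrix.sum_apply]
    have hrhs : (V * Matrix.diagonal (fun j => (R j : ℂ)) * star V) a b
        = ∑ j, (R j : ℂ) * (v j a * star (v j b)) := by
      rw [Matrix.mul_apply]
      rw [Finset.sum_congr rfl (fun k _ => by
        rw [Matrix.mul_diagonal, Matrix.star_eq_conjTranspose, Matrix.conjTranspose_apply])]
      refine Finset.sum_congr rfl fun k _ => ?_
      have h1 : V a k = v k a := rfl
      have h2 : V b k = v k b := rfl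
      rw [h1, h2]
      ring
    rw [hrhs]
    refine Finset.sum_congr rfl fun j _ => ?_
    rw [Matrix.smul_apply, hventry j a b, smul_eq_mul]
  have hherm := hρ.1.isHermitian
  have hmulti := eig_multiset ρ hherm R V hVV' hVV hρdiag
  rw [vnEntropy, dif_pos hherm, shannonEntropy]
  congr 1
  set g : ℂ → ℝ := fun z => z.re * Real.logb 2 z.re with hg
  calc ∑ i, hherm.eigenvalues i * Real.logb 2 (hherm.eigenvalues i)
      = ∑ i, g ((hherm.eigenvalues i : ℂ)) := by
        refine Finset.sum_congr rfl fun i _ => ?_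
        simp [hg]
    _ = ((univ.val.map fun i : Fin d => ((hherm.eigenvalues i : ℂ))).map g).sum := by
        rw [Multiset.map_map]
        rfl
    _ = ((univ.val.map fun j : Fin d => ((R j : ℂ))).map g).sum := by rw [hmulti]
    _ = ∑ j, g ((R j : ℂ)) := by
        rw [Multiset.map_map]
        rfl
    _ = ∑ j, R j * Real.logb 2 (R j) := by
        refine Finset.sum_congr rfl fun j _ => ?_
        simp [hg]


/-- **Lemma 2, part 3 (Typical projector, trace bounds).**
`Tr Π^n_{ρ,δ} ≤ exp₂(nH(ρ) + Kdδ√n)` and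
`Tr Π^n_{ρ,δ} ≥ (1 − d/δ²) exp₂(nH(ρ) − Kdδ√n)`, with `K = 2 log₂(e)/e`. -/
theorem typicalProj_trace_bounds {d : ℕ} (ρ : Mat d) (hρ : IsState ρ)
    (R : Fin d → ℝ) (π : Fin d → Mat d) (hdiag : IsDiagonalization ρ R π)
    (n : ℕ) (hn : 0 < n) (δ : ℝ) (hδ : 0 < δ) :
    (Matrix.trace (typicalProj n R π δ)).re
        ≤ exp2 ((n : ℝ) * vnEntropy ρ + Kconst * d * δ * Real.sqrt n) ∧
      (1 - (d : ℝ) / δ ^ 2) * exp2 ((n : ℝ) * vnEntropy ρ - Kconst * d * δ * Real.sqrt n)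
        ≤ (Matrix.trace (typicalProj n R π δ)).re := by
  have hPD : IsProbDist R := hdiag.2.2.2.2.2.2
  have htrace : (Matrix.trace (typicalProj n R π δ)).re = ((typicalSet n R δ).card : ℝ) := by
    rw [trace_typicalProj R π hdiag.2.2.1 δ]
    simp
  have hH : vnEntropy ρ = shannonEntropy R := vnEntropy_eq_shannon ρ hρ R π hdiag
  have hcup := typicalSet_card_upper (X := Fin d) (n := n) hPD hδ.le
  have hclow := typicalSet_card_lower (X := Fin d) (n := n) hPD hn hδ
  rw [Fintype.card_fin] at hcup hclow
  constructor
  · rw [htrace, hH]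
    exact hcup
  · rw [htrace, hH]
    exact hclow
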